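/- arXiv:1506.06526 — 3 statements merged into one kernel-verified Lean document; each statement's English description precedes it below -/
import Mathlib

section
/- For the complex unit vector φ_n = (1/√n)(1, ω, ω², …, ω^{n−1})ᵀ with ω = e^{2πi/n} and n ≥ 3, the quadratic form ⟨φ_n, (N_n − N_nᵀ) φ_n⟩ equals i·cot(π/n), where N_n is the strictly upper triangular all-ones matrix. -/
open Matrix

open Complex in
/-- `⟨φ, (N − Nᵀ)φ⟩ = i cot(π/n)` for the Fourier vector
`φ = (1/√n)(1, ω, …, ω^{n−1})`, `ω = e^{2πi/n}`, `n ≥ 3`. -/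
theorem stmt_3 (n : ℕ) (hn : 3 ≤ n) (N : Matrix (Fin n) (Fin n) ℂ)
    (hN : ∀ i j : Fin n, N i j = if i < j then 1 else 0)
    (ω : ℂ) (hω : ω = Complex.exp (2 * Real.pi * Complex.I / n))
    (φ : Fin n → ℂ) (hφ : ∀ i : Fin n, φ i = (1 / Real.sqrt n : ℝ) * ω ^ (i : ℕ)) :
    dotProduct (star φ) ((N - Nᵀ).mulVec φ)
      = Complex.I * (Real.cos (Real.pi / n) / Real.sin (Real.pi / n)) := by
  have hn0 : 0 < n := by omega
  have hnR : (0:ℝ) < n := by exact_mod_cast hn0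
  have hnC : (n:ℂ) ≠ 0 := by exact_mod_cast hn0.ne'
  set θ : ℝ := Real.pi / n with hθ
  have hθpos : 0 < θ := by positivity
  have hθlt : 2*θ < Real.pi := by
    rw [hθ]
    rw [mul_div_assoc', div_lt_iff₀ hnR]
    have h3 : (3:ℝ) ≤ (n:ℝ) := by exact_mod_cast hn
    nlinarith [Real.pi_pos, mul_nonneg Real.pi_pos.le (by linarith : (0:ℝ) ≤ (n:ℝ) - 3)]
  have hωθ : ω = Complex.exp ((2*θ : ℝ) * Complex.I) := by
    rw [hω]; congr 1; push_cast [hθ]; field_simp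
  have him : ω.im = Real.sin (2*θ) := by rw [hωθ, Complex.exp_ofReal_mul_I_im]
  have himpos : 0 < ω.im := by
    rw [him]; exact Real.sin_pos_of_pos_of_lt_pi (by positivity) hθlt
  have hω1 : ω ≠ 1 := by
    intro h; rw [h] at himpos; simp at himpos
  have hωsub : ω - 1 ≠ 0 := sub_ne_zero.mpr hω1
  have hω0 : ω ≠ 0 := by rw [hω]; exact Complex.exp_ne_zero _
  have hωn : ω ^ n = 1 := by
    rw [hω, ← Complex.exp_nat_mul]
    have h2 : (n:ℂ) * (2 * Real.pi * Complex.I / n) = 2*Real.pi*Complex.I := by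
      field_simp
    rw [h2, Complex.exp_two_pi_mul_I]
  have hGn : ∑ j ∈ Finset.range n, ω ^ j = 0 := by
    rw [geom_sum_eq hω1, hωn]; simp
  have hωinv1 : ω⁻¹ ≠ 1 := by simp [inv_eq_one, hω1]
  have hωinvn : (ω⁻¹) ^ n = 1 := by rw [inv_pow, hωn]; simp
  have hGn' : ∑ j ∈ Finset.range n, (ω⁻¹) ^ j = 0 := by
    rw [geom_sum_eq hωinv1, hωinvn]; simp
  have hconj : (starRingEnd ℂ) ω = ω⁻¹ := by
    rw [hωθ, ← Complex.exp_conj, ← Complex.exp_neg]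
    congr 1
    rw [_root_.map_mul, Complex.conj_ofReal, Complex.conj_I]
    ring
  have hr2 : ((1 / Real.sqrt n : ℝ):ℂ) * ((1 / Real.sqrt n : ℝ):ℂ) = 1/(n:ℂ) := by
    rw [← Complex.ofReal_mul, div_mul_div_comm, one_mul, Real.mul_self_sqrt hnR.le]
    push_cast
    ring
  -- inner geometric sum
  have inner : ∀ i : ℕ, i < n →
      (∑ j ∈ Finset.range n, ((if i < j then ω^j else 0) - (if j < i then ω^j else 0)))
      = (2 - ω^(i+1) - ω^i) / (ω - 1) := by
    intro i hi
    rw [Finset.sum_sub_distrib]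
    have e1 : (∑ j ∈ Finset.range n, if i < j then ω^j else 0)
        = ∑ j ∈ Finset.Ico (i+1) n, ω^j := by
      rw [← Finset.sum_filter]
      congr 1
      ext j
      simp only [Finset.mem_filter, Finset.mem_Ico, Finset.mem_range]
      omega
    have e2 : (∑ j ∈ Finset.range n, if j < i then ω^j else 0)
        = ∑ j ∈ Finset.range i, ω^j := by
      rw [← Finset.sum_filter]
      congr 1
      ext j
      simp only [Finset.mem_filter, Finset.mem_range]
      omega
    rw [e1, e2, Finset.sum_Ico_eq_sub _ (by omega : i + 1 ≤ n), hGn,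
      geom_sum_eq hω1, geom_sum_eq hω1]
    field_simp
    ring
  have expand : dotProduct (star φ) ((N - Nᵀ).mulVec φ)
      = ∑ i : Fin n, ∑ j : Fin n,
        (starRingEnd ℂ) (φ i) * ((N i j - N j i) * φ j) := by
    simp [dotProduct, Matrix.mulVec, Matrix.transpose_apply, Finset.mul_sum,
      Complex.star_def]
  have step : ∀ i : Fin n,
      (∑ j : Fin n, (starRingEnd ℂ) (φ i) * ((N i j - N j i) * φ j))
      = (fun i : ℕ => (1/(n:ℂ)) * ((ω⁻¹)^i * ((2 - ω^(i+1) - ω^i)/(ω-1)))) (i:ℕ) := by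
    intro i
    have hj : ∀ j : Fin n, (starRingEnd ℂ) (φ i) * ((N i j - N j i) * φ j)
        = (fun j : ℕ => (1/(n:ℂ)) * ((ω⁻¹)^(i:ℕ) *
            ((if (i:ℕ) < j then ω^j else 0) - (if j < (i:ℕ) then ω^j else 0)))) (j:ℕ) := by
      intro j
      simp only [hφ, hN]
      rw [_root_.map_mul, Complex.conj_ofReal, _root_.map_pow, hconj, ← hr2]
      simp only [Fin.lt_def]
      split_ifs with h1 h2 <;> first | omega | ring
    calc (∑ j : Fin n, (starRingEnd ℂ) (φ i) * ((N i j - N j i) * φ j))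
        = ∑ j : Fin n, (fun j : ℕ => (1/(n:ℂ)) * ((ω⁻¹)^(i:ℕ) *
            ((if (i:ℕ) < j then ω^j else 0) - (if j < (i:ℕ) then ω^j else 0)))) (j:ℕ) :=
          Finset.sum_congr rfl (fun j _ => hj j)
      _ = ∑ j ∈ Finset.range n, (1/(n:ℂ)) * ((ω⁻¹)^(i:ℕ) *
            ((if (i:ℕ) < j then ω^j else 0) - (if j < (i:ℕ) then ω^j else 0))) :=
          by exact Fin.sum_univ_eq_sum_range (fun j : ℕ => (1/(n:ℂ)) * ((ω⁻¹)^(i:ℕ) *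
            ((if (i:ℕ) < j then ω^j else 0) - (if j < (i:ℕ) then ω^j else 0)))) n
      _ = (1/(n:ℂ)) * ((ω⁻¹)^(i:ℕ) * ∑ j ∈ Finset.range n,
            ((if (i:ℕ) < j then ω^j else 0) - (if j < (i:ℕ) then ω^j else 0))) := by
          rw [← Finset.mul_sum, ← Finset.mul_sum]
      _ = (1/(n:ℂ)) * ((ω⁻¹)^(i:ℕ) * ((2 - ω^((i:ℕ)+1) - ω^(i:ℕ))/(ω-1))) := by
          rw [inner (i:ℕ) i.isLt]
  have main : dotProduct (star φ) ((N - Nᵀ).mulVec φ) = -(ω+1)/(ω-1) := by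
    rw [expand, Finset.sum_congr rfl (fun i _ => step i)]
    rw [Fin.sum_univ_eq_sum_range
      (fun i : ℕ => (1/(n:ℂ)) * ((ω⁻¹)^i * ((2 - ω^(i+1) - ω^i)/(ω-1)))) n]
    have hsummand : ∀ i ∈ Finset.range n,
        (1/(n:ℂ)) * ((ω⁻¹)^i * ((2 - ω^(i+1) - ω^i)/(ω-1)))
        = (1/(n:ℂ)) * (2/(ω-1)) * (ω⁻¹)^i - (1/(n:ℂ)) * ((ω+1)/(ω-1)) := by
      intro i _
      have hy : ω ^ i ≠ 0 := pow_ne_zero _ hω0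
      rw [inv_pow]
      field_simp [hy, hωsub, hnC]
      ring
    rw [Finset.sum_congr rfl hsummand, Finset.sum_sub_distrib, ← Finset.mul_sum, hGn',
      Finset.sum_const, Finset.card_range, nsmul_eq_mul]
    field_simp
    ring
  rw [main]
  have hS : Real.sin θ ≠ 0 :=
    ne_of_gt (Real.sin_pos_of_pos_of_lt_pi hθpos (by linarith))
  have hSC : ((Real.sin θ : ℝ):ℂ) ≠ 0 := by exact_mod_cast hS
  have hωval : ω = (2 * Complex.cos (θ:ℂ)^2 - 1) +
      (2 * Complex.sin (θ:ℂ) * Complex.cos (θ:ℂ)) * Complex.I := by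
    rw [hωθ, Complex.exp_mul_I]
    push_cast
    rw [Complex.cos_two_mul, Complex.sin_two_mul]
  rw [show Complex.I * ((Real.cos θ:ℂ)/(Real.sin θ:ℂ))
      = (Complex.I * (Real.cos θ:ℂ))/(Real.sin θ:ℂ) from mul_div_assoc' _ _ _,
    div_eq_div_iff hωsub hSC, hωval, Complex.ofReal_cos, Complex.ofReal_sin]
  linear_combination (-2 * Complex.cos (θ:ℂ) * Complex.I) * Complex.sin_sq_add_cos_sq (θ:ℂ) +
    (-2 * Complex.cos (θ:ℂ)^2 * Complex.sin (θ:ℂ)) * Complex.I_sq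
end

section
/- For the vector φ_n = (1/√n)(1, ω, …, ω^{n−1})ᵀ with ω = e^{2πi/n} and n ≥ 2, ⟨φ_n, N_n φ_n⟩ = 1/(ω̄ − 1), where N_n is the strictly upper triangular all-ones n×n matrix. -/
/-- `⟨φ, Nφ⟩ = 1/(ω̄ − 1)` for the Fourier vector
`φ = (1/√n)(1, ω, …, ω^{n−1})`, `ω = e^{2πi/n}`, `n ≥ 2`. -/
theorem stmt_4 (n : ℕ) (hn : 2 ≤ n) (N : Matrix (Fin n) (Fin n) ℂ)
    (hN : ∀ i j : Fin n, N i j = if i < j then 1 else 0)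
    (ω : ℂ) (hω : ω = Complex.exp (2 * Real.pi * Complex.I / n))
    (φ : Fin n → ℂ) (hφ : ∀ i : Fin n, φ i = (1 / Real.sqrt n : ℝ) * ω ^ (i : ℕ)) :
    dotProduct (star φ) (N.mulVec φ) = 1 / (starRingEnd ℂ ω - 1) := by
  have hn0 : (n : ℂ) ≠ 0 := by
    exact_mod_cast Nat.cast_ne_zero.mpr (by omega)
  set c : ℂ := starRingEnd ℂ ω with hc
  -- ω^n = 1
  have hωn : ω ^ n = 1 := by
    rw [hω, ← Complex.exp_nat_mul]
    have : (n : ℂ) * (2 * Real.pi * Complex.I / n) = 2 * Real.pi * Complex.I := by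
      field_simp
    rw [this, Complex.exp_two_pi_mul_I]
  -- ω ≠ 1
  have hprim : IsPrimitiveRoot ω n := by
    rw [hω]; exact Complex.isPrimitiveRoot_exp n (by omega)
  have hω1 : ω ≠ 1 := by
    intro h
    have := hprim.pow_ne_one_of_pos_of_lt (by norm_num) (by omega : 1 < n)
    simp [h] at this
  -- conj ω * ω = 1
  have hcω : c * ω = 1 := by
    rw [hc, hω, ← Complex.exp_conj, ← Complex.exp_add]
    have : (starRingEnd ℂ) (2 * ↑Real.pi * Complex.I / ↑n) + 2 * ↑Real.pi * Complex.I / ↑n = 0 := by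
      simp [map_div₀, Complex.conj_I, map_ofNat]
      ring
    rw [this, Complex.exp_zero]
  have hc1 : c ≠ 1 := by
    intro h
    apply hω1
    have := congrArg (starRingEnd ℂ) h
    simpa [hc] using this
  -- the geometric sum vanishes
  have hgeom : ∑ j ∈ Finset.range n, ω ^ j = 0 := by
    rw [geom_sum_eq hω1, hωn]
    simp
  -- abbreviation
  set A : ℂ := ∑ j ∈ Finset.range n, (∑ i ∈ Finset.range j, c ^ i) * ω ^ j with hA
  have hkey : (c - 1) * A = n := by
    rw [hA, Finset.mul_sum]
    have : ∀ j ∈ Finset.range n, (c - 1) * ((∑ i ∈ Finset.range j, c ^ i) * ω ^ j)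
        = 1 - ω ^ j := by
      intro j hj
      rw [← mul_assoc, mul_comm (c - 1), geom_sum_mul]
      have h2 : (c ^ j - 1) * ω ^ j = (c * ω) ^ j - ω ^ j := by ring
      rw [h2, hcω, one_pow]
    rw [Finset.sum_congr rfl this, Finset.sum_sub_distrib, hgeom]
    simp
  have hcne : c - 1 ≠ 0 := sub_ne_zero.mpr hc1
  have hAval : A = n / (c - 1) := by
    field_simp
    linear_combination hkey
  -- now compute the LHS
  have hr : ((1 / Real.sqrt n : ℝ) : ℂ) * ((1 / Real.sqrt n : ℝ) : ℂ) = 1 / (n : ℂ) := by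
    have hs : Real.sqrt n * Real.sqrt n = n := Real.mul_self_sqrt (Nat.cast_nonneg n)
    push_cast
    rw [div_mul_div_comm, one_mul]
    congr 1
    exact_mod_cast hs
  have hLHS : dotProduct (star φ) (N.mulVec φ) = (1 / (n : ℂ)) * A := by
    unfold dotProduct Matrix.mulVec
    simp only [Pi.star_apply, hφ, hN, RCLike.star_def, map_mul, map_pow, Complex.conj_ofReal,
      dotProduct]
    have step1 : ∀ i : Fin n, (∑ j : Fin n, (if i < j then (1:ℂ) else 0) *
        (((1 / Real.sqrt n : ℝ) : ℂ) * ω ^ (j : ℕ)))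
        = ((1 / Real.sqrt n : ℝ) : ℂ) * ∑ j : Fin n, (if i < j then ω ^ (j:ℕ) else 0) := by
      intro i
      rw [Finset.mul_sum]
      apply Finset.sum_congr rfl
      intro j _
      by_cases h : i < j <;> simp [h]
    calc (∑ i : Fin n, (((1 / Real.sqrt n : ℝ) : ℂ) * (c ^ (i:ℕ))) *
          (∑ j : Fin n, (if i < j then (1:ℂ) else 0) *
            (((1 / Real.sqrt n : ℝ) : ℂ) * ω ^ (j : ℕ))))
        = (1 / (n:ℂ)) * ∑ i : Fin n, c ^ (i:ℕ) *
            ∑ j : Fin n, (if i < j then ω ^ (j:ℕ) else 0) := by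
          rw [Finset.mul_sum]
          apply Finset.sum_congr rfl
          intro i _
          rw [step1 i, ← hr]
          ring
      _ = (1 / (n:ℂ)) * A := by
          congr 1
          have h1 : ∀ i : Fin n, c ^ (i:ℕ) * ∑ j : Fin n, (if i < j then ω ^ (j:ℕ) else 0)
              = ∑ j : Fin n, (if i < j then c ^ (i:ℕ) * ω ^ (j:ℕ) else 0) := by
            intro i; rw [Finset.mul_sum]; apply Finset.sum_congr rfl; intro j _
            by_cases h : i < j <;> simp [h]
          simp only [h1]
          rw [Finset.sum_comm, hA,
            ← Fin.sum_univ_eq_sum_range (fun j => (∑ i ∈ Finset.range j, c ^ i) * ω ^ j) n]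
          apply Finset.sum_congr rfl
          intro j _
          simp only [Fin.lt_def]
          rw [Fin.sum_univ_eq_sum_range (fun i => if i < (j:ℕ) then c ^ i * ω ^ (j:ℕ) else 0) n,
            Finset.sum_mul]
          have hsub : Finset.range (j:ℕ) ⊆ Finset.range n := Finset.range_subset_range.mpr j.isLt.le
          rw [← Finset.sum_subset hsub (fun x _ hx => by
            rw [Finset.mem_range, not_lt] at hx; simp [Nat.not_lt.mpr hx])]
          apply Finset.sum_congr rfl
          intro i hi
          rw [Finset.mem_range] at hi
          simp [hi]
  rw [hLHS, hAval]
  field_simp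
end

section
/- Let A, B be real symmetric 2k×2k matrices with B ⪰ 0 and (A − B) + (i/2)J_{2k} ⪰ 0, where J_{2k} = ⊕ₖ [[0,1],[−1,0]]. Then for every n ≥ 1 the 2kn×2kn matrix Σ_n(A,B) = A ⊗ I_n + B ⊗ (N_n + N_nᵀ) satisfies Σ_n(A,B) + (i/2) J_{2k} ⊗ I_n ⪰ 0, where N_n is the strictly upper triangular all-ones n×n matrix. -/
open Matrix

open scoped ComplexOrder

open Kronecker

lemma kron_conjTranspose {m n p q : Type*} (L : Matrix m n ℂ) (K : Matrix p q ℂ) :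
    (Lᴴ) ⊗ₖ (Kᴴ) = (L ⊗ₖ K)ᴴ := by
  ext ⟨i, j⟩ ⟨i', j'⟩
  simp [kroneckerMap_apply, conjTranspose_apply]

open scoped MatrixOrder Matrix.Norms.L2Operator in
lemma posSemidef_iff_eq_transpose_mul_self {m : Type*} {𝕜 : Type*} [RCLike 𝕜] [Fintype m]
    [DecidableEq m] {M : Matrix m m 𝕜} : M.PosSemidef ↔ ∃ L : Matrix m m 𝕜, M = Lᴴ * L := by
  constructor
  · intro hM
    exact CStarAlgebra.nonneg_iff_eq_star_mul_self.mp hM.nonneg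
  · rintro ⟨L, rfl⟩
    exact posSemidef_conjTranspose_mul_self _

lemma kron_posSemidef {m n : Type*} [Fintype m] [Fintype n] [DecidableEq m] [DecidableEq n]
    {M : Matrix m m ℂ} {N : Matrix n n ℂ} (hM : M.PosSemidef) (hN : N.PosSemidef) :
    (M ⊗ₖ N).PosSemidef := by
  obtain ⟨L, rfl⟩ := posSemidef_iff_eq_transpose_mul_self.mp hM
  obtain ⟨K, rfl⟩ := posSemidef_iff_eq_transpose_mul_self.mp hN
  rw [mul_kronecker_mul, kron_conjTranspose]
  exact posSemidef_conjTranspose_mul_self _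

lemma map_posSemidef {m : Type*} [Fintype m] [DecidableEq m]
    {M : Matrix m m ℝ} (hM : M.PosSemidef) : (M.map Complex.ofReal).PosSemidef := by
  obtain ⟨L, rfl⟩ := posSemidef_iff_eq_transpose_mul_self.mp hM
  have h1 : (Lᴴ * L).map Complex.ofReal =
      (L.map Complex.ofReal)ᴴ * (L.map Complex.ofReal) := by
    ext i j
    simp only [Matrix.map_apply, Matrix.mul_apply, conjTranspose_apply, Matrix.map_apply,
      Complex.star_def, Complex.conj_ofReal, star_trivial]
    push_cast
    rfl
  rw [h1]
  exact posSemidef_conjTranspose_mul_self _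

lemma allOnes_posSemidef (n : ℕ) :
    (Matrix.of (fun _ _ => (1 : ℂ)) : Matrix (Fin n) (Fin n) ℂ).PosSemidef := by
  have : (Matrix.of (fun _ _ => (1 : ℂ)) : Matrix (Fin n) (Fin n) ℂ) =
      (Matrix.of (fun _ _ => (1 : ℂ)) : Matrix (Fin 1) (Fin n) ℂ)ᴴ *
      (Matrix.of (fun _ _ => (1 : ℂ)) : Matrix (Fin 1) (Fin n) ℂ) := by
    ext i j
    simp [Matrix.mul_apply, conjTranspose_apply]
  rw [this]
  exact posSemidef_conjTranspose_mul_self _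

/-- If `B ⪰ 0` and `(A−B) + (i/2)J ⪰ 0`, then
`Σ_n(A,B) + (i/2) J ⊗ I_n = A ⊗ I_n + B ⊗ (N + Nᵀ) + (i/2) J ⊗ I_n ⪰ 0` for all `n ≥ 1`. -/
theorem stmt_7 (k : ℕ) (A B J : Matrix (Fin (2 * k)) (Fin (2 * k)) ℝ)
    (hA : A.IsSymm) (hB : B.IsSymm)
    (hJ : ∀ i j : Fin (2 * k), J i j =
      if (j : ℕ) = (i : ℕ) + 1 ∧ Even (i : ℕ) then 1
      else if (i : ℕ) = (j : ℕ) + 1 ∧ Even (j : ℕ) then -1 else 0)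
    (hBpos : B.PosSemidef)
    (hAB : ((A - B).map Complex.ofReal
      + (Complex.I / 2) • J.map Complex.ofReal).PosSemidef) :
    ∀ n : ℕ, 1 ≤ n → ∀ N : Matrix (Fin n) (Fin n) ℝ,
      (∀ i j : Fin n, N i j = if i < j then 1 else 0) →
      ((A.map Complex.ofReal) ⊗ₖ (1 : Matrix (Fin n) (Fin n) ℂ)
        + (B.map Complex.ofReal) ⊗ₖ ((N + Nᵀ).map Complex.ofReal)
        + (Complex.I / 2) •
          ((J.map Complex.ofReal) ⊗ₖ (1 : Matrix (Fin n) (Fin n) ℂ))).PosSemidef := by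
  intro n hn N hN
  set E : Matrix (Fin n) (Fin n) ℂ := Matrix.of (fun _ _ => (1 : ℂ)) with hE
  have key : (A.map Complex.ofReal) ⊗ₖ (1 : Matrix (Fin n) (Fin n) ℂ)
        + (B.map Complex.ofReal) ⊗ₖ ((N + Nᵀ).map Complex.ofReal)
        + (Complex.I / 2) •
          ((J.map Complex.ofReal) ⊗ₖ (1 : Matrix (Fin n) (Fin n) ℂ))
      = ((A - B).map Complex.ofReal
        + (Complex.I / 2) • J.map Complex.ofReal) ⊗ₖ (1 : Matrix (Fin n) (Fin n) ℂ)
        + (B.map Complex.ofReal) ⊗ₖ E := by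
    ext ⟨i, i'⟩ ⟨j, j'⟩
    simp only [Matrix.add_apply, Matrix.smul_apply, kroneckerMap_apply, Matrix.map_apply,
      Matrix.sub_apply, Matrix.transpose_apply, hE, Matrix.of_apply, smul_eq_mul,
      Matrix.one_apply]
    rw [hN i' j', hN j' i']
    rcases lt_trichotomy i' j' with h | h | h
    · simp only [if_pos h, if_neg (not_lt_of_gt h), if_neg (ne_of_lt h)]
      push_cast
      ring
    · subst h
      simp only [if_neg (lt_irrefl i'), if_pos rfl]
      push_cast
      ring
    · simp only [if_pos h, if_neg (not_lt_of_gt h), if_neg (ne_of_gt h)]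
      push_cast
      ring
  rw [key]
  exact (kron_posSemidef hAB Matrix.PosSemidef.one).add
    (kron_posSemidef (map_posSemidef hBpos) (allOnes_posSemidef n))
end
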